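/- Let ι be a finite type, S a nonempty subset of ℤ≥0^ι, and N(S) the associated Newton polyhedron. For vectors of weights ρ and ρ' on ℝ^ι, with ν = min{ρ(σ) : σ ∈ S}, ν' = min{ρ'(σ) : σ ∈ S}, F_ρ = {x ∈ N(S) : ρ(x) = ν} and F_{ρ'} = {x ∈ N(S) : ρ'(x) = ν'}, the following are equivalent: (i) F_ρ = F_{ρ'}; (ii) {σ ∈ S : ρ(σ) = ν} = {σ ∈ S : ρ'(σ) = ν'}. -/

import Mathlib

open Pointwise

/-- A vector of weights on `ℝ^ι`: a linear map `ρ : (ι → ℝ) → ℝ` with `ρ(σ) > 0`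
for every nonzero `σ` with all coordinates nonnegative. -/
def IsWeightVector {ι : Type*} (ρ : (ι → ℝ) →ₗ[ℝ] ℝ) : Prop :=
  ∀ σ : ι → ℝ, (∀ i, 0 ≤ σ i) → σ ≠ 0 → 0 < ρ σ

/-- The Newton polyhedron of a set `S ⊆ ℤ≥0^ι`: the Minkowski sum of the convex
hull of `S` (viewed inside `ℝ^ι`) with the nonnegative orthant. -/
def newtonPolyhedron {ι : Type*} (S : Set (ι → ℕ)) : Set (ι → ℝ) :=
  convexHull ℝ ((fun σ : ι → ℕ => fun i => (σ i : ℝ)) '' S) + {x : ι → ℝ | ∀ i, 0 ≤ x i}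

/-- If a point of the convex hull attains the lower bound `ν` of a linear functional `g`
on `s`, then it lies in the convex hull of the points of `s` where `ν` is attained. -/
lemma mem_convexHull_minSet {E : Type*} [AddCommGroup E] [Module ℝ E]
    (g : E →ₗ[ℝ] ℝ) (s : Set E) (ν : ℝ) (hlb : ∀ p ∈ s, ν ≤ g p)
    {y : E} (hy : y ∈ convexHull ℝ s) (hgy : g y = ν) :
    y ∈ convexHull ℝ {p ∈ s | g p = ν} := by
  rw [convexHull_eq] at hy
  obtain ⟨κ, t, w, z, hw0, hw1, hz, hyc⟩ := hy
  have hyval : y = ∑ i ∈ t, w i • z i := by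
    rw [← hyc, Finset.centerMass_eq_of_sum_1 _ _ hw1]
  have hgsum : ∑ i ∈ t, w i * g (z i) = ν := by
    rw [← hgy, hyval, map_sum]
    simp [smul_eq_mul]
  have hzero : ∑ i ∈ t, w i * (g (z i) - ν) = 0 := by
    have : ∑ i ∈ t, w i * (g (z i) - ν)
        = (∑ i ∈ t, w i * g (z i)) - (∑ i ∈ t, w i) * ν := by
      rw [Finset.sum_mul, ← Finset.sum_sub_distrib]
      congr 1; ext i; ring
    rw [this, hgsum, hw1, one_mul, sub_self]
  have hkey : ∀ i ∈ t, w i * (g (z i) - ν) = 0 := by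
    rw [← Finset.sum_eq_zero_iff_of_nonneg]
    · exact hzero
    · intro i hi
      exact mul_nonneg (hw0 i hi) (sub_nonneg.2 (hlb _ (hz i hi)))
  have hyc' : ({i ∈ t | w i ≠ 0} : Finset κ).centerMass w z = y := by
    rw [Finset.centerMass_filter_ne_zero]; exact hyc
  rw [← hyc']
  refine Finset.centerMass_mem_convexHull _ ?_ ?_ ?_
  · intro i hi
    exact hw0 i (Finset.mem_filter.1 hi).1
  · have : ∑ i ∈ ({i ∈ t | w i ≠ 0} : Finset κ), w i = 1 := by
      rw [Finset.sum_filter_ne_zero]; exact hw1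
    rw [this]; exact one_pos
  · intro i hi
    obtain ⟨hit, hwi⟩ := Finset.mem_filter.1 hi
    refine ⟨hz i hit, ?_⟩
    have := hkey i hit
    rcases mul_eq_zero.1 this with h | h
    · exact absurd h hwi
    · linarith [sub_eq_zero.1 h]

/-- One-sided version of the hard direction. -/
lemma face_subset_of_min_points_subset {ι : Type*} [Fintype ι]
    (ρ ρ' : (ι → ℝ) →ₗ[ℝ] ℝ) (hρ : IsWeightVector ρ)
    (S : Set (ι → ℕ)) (ν ν' : ℝ)
    (hν : IsLeast ((fun σ : ι → ℕ => ρ (fun i => (σ i : ℝ))) '' S) ν)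
    (h : {σ ∈ S | ρ (fun i => (σ i : ℝ)) = ν} ⊆ {σ ∈ S | ρ' (fun i => (σ i : ℝ)) = ν'}) :
    {x ∈ newtonPolyhedron S | ρ x = ν} ⊆ {x ∈ newtonPolyhedron S | ρ' x = ν'} := by
  set f : (ι → ℕ) → (ι → ℝ) := fun σ => fun i => (σ i : ℝ) with hf
  rintro x ⟨hxN, hxρ⟩
  refine ⟨hxN, ?_⟩
  obtain ⟨y, hy, z, hz, hyz⟩ := hxN
  replace hyz : y + z = x := hyz
  have hlb : ∀ p ∈ f '' S, ν ≤ ρ p := by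
    rintro p ⟨σ, hσ, rfl⟩
    exact hν.2 ⟨σ, hσ, rfl⟩
  have hyν : ν ≤ ρ y := by
    have : convexHull ℝ (f '' S) ⊆ {p | ν ≤ ρ p} :=
      convexHull_min hlb (convex_halfSpace_ge (LinearMap.isLinear ρ) ν)
    exact this hy
  have hzρ : 0 ≤ ρ z := by
    rcases eq_or_ne z 0 with rfl | hz0
    · simp
    · exact le_of_lt (hρ z hz hz0)
  have hxyz : ρ y + ρ z = ν := by
    rw [← map_add, hyz]; exact hxρ
  have hz0 : z = 0 := by
    by_contra hz0
    have := hρ z hz hz0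
    linarith
  subst hz0
  rw [add_zero] at hyz
  subst hyz
  have hρy : ρ y = ν := by linarith
  have hmem : y ∈ convexHull ℝ {p ∈ f '' S | ρ p = ν} :=
    mem_convexHull_minSet ρ (f '' S) ν hlb hy hρy
  have himg : {p ∈ f '' S | ρ p = ν} ⊆ f '' {σ ∈ S | ρ (f σ) = ν} := by
    rintro p ⟨⟨σ, hσ, rfl⟩, hpν⟩
    exact ⟨σ, ⟨hσ, hpν⟩, rfl⟩
  have hmem' : y ∈ convexHull ℝ (f '' {σ ∈ S | ρ' (f σ) = ν'}) :=
    convexHull_mono (himg.trans (Set.image_mono (f := f) h)) hmem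
  have : convexHull ℝ (f '' {σ ∈ S | ρ' (f σ) = ν'}) ⊆ {p | ρ' p = ν'} := by
    refine convexHull_min ?_ (convex_hyperplane (LinearMap.isLinear ρ') ν')
    rintro p ⟨σ, ⟨_, hσν⟩, rfl⟩
    exact hσν
  exact this hmem'

theorem face_eq_iff_min_points_eq {ι : Type*} [Fintype ι]
    (ρ ρ' : (ι → ℝ) →ₗ[ℝ] ℝ) (hρ : IsWeightVector ρ) (hρ' : IsWeightVector ρ')
    (S : Set (ι → ℕ)) (hS : S.Nonempty) (ν ν' : ℝ)
    (hν : IsLeast ((fun σ : ι → ℕ => ρ (fun i => (σ i : ℝ))) '' S) ν)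
    (hν' : IsLeast ((fun σ : ι → ℕ => ρ' (fun i => (σ i : ℝ))) '' S) ν') :
    {x ∈ newtonPolyhedron S | ρ x = ν} = {x ∈ newtonPolyhedron S | ρ' x = ν'} ↔
      {σ ∈ S | ρ (fun i => (σ i : ℝ)) = ν} = {σ ∈ S | ρ' (fun i => (σ i : ℝ)) = ν'} := by
  set f : (ι → ℕ) → (ι → ℝ) := fun σ => fun i => (σ i : ℝ) with hf
  have hmemN : ∀ σ ∈ S, f σ ∈ newtonPolyhedron S := by
    intro σ hσ
    refine ⟨f σ, subset_convexHull ℝ _ ⟨σ, hσ, rfl⟩, 0, ?_, add_zero _⟩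
    intro i; exact le_refl 0
  constructor
  · intro h
    apply Set.Subset.antisymm
    · rintro σ ⟨hσ, hσν⟩
      have : f σ ∈ {x ∈ newtonPolyhedron S | ρ x = ν} := ⟨hmemN σ hσ, hσν⟩
      rw [h] at this
      exact ⟨hσ, this.2⟩
    · rintro σ ⟨hσ, hσν⟩
      have : f σ ∈ {x ∈ newtonPolyhedron S | ρ' x = ν'} := ⟨hmemN σ hσ, hσν⟩
      rw [← h] at this
      exact ⟨hσ, this.2⟩
  · intro h
    apply Set.Subset.antisymm
    · exact face_subset_of_min_points_subset ρ ρ' hρ S ν ν' hν h.subset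
    · exact face_subset_of_min_points_subset ρ' ρ hρ' S ν' ν hν' h.symm.subset
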